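/- (Sunflower Lemma, Erdős–Rado) Every family of more than k^d · d! distinct finite sets, each of size at most d, contains a sunflower of size k+1, i.e., k+1 pairwise distinct sets whose pairwise intersections are all equal to one common set. -/

import Mathlib

private lemma insert_inter_insert' {α : Type*} [DecidableEq α] (a : α) (s t : Finset α) :
    insert a s ∩ insert a t = insert a (s ∩ t) := by
  ext x; simp [Finset.mem_insert, Finset.mem_inter]; tauto

private lemma sunflower_aux {α : Type*} [DecidableEq α] (k : ℕ) (hk : 1 ≤ k) :
    ∀ (d : ℕ) (F : Finset (Finset α)), (∀ e ∈ F, e.card ≤ d) →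
    k ^ d * Nat.factorial d < F.card →
    ∃ S ⊆ F, S.card = k + 1 ∧ ∃ c : Finset α,
      ∀ p ∈ S, ∀ q ∈ S, p ≠ q → p ∩ q = c := by
  intro d
  induction d with
  | zero =>
    intro F hsize hbig
    simp only [pow_zero, Nat.factorial_zero, one_mul] at hbig
    -- all sets are empty, so F ⊆ {∅}, card ≤ 1, contradiction
    exfalso
    have hF : F ⊆ {∅} := by
      intro e he
      have := hsize e he
      simp only [Nat.le_zero, Finset.card_eq_zero] at this
      simp [this]
    have := Finset.card_le_card hF
    simp at this
    omega
  | succ d' ih =>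
    intro F hsize hbig
    set d := d' + 1 with hd
    -- the collection of pairwise disjoint subfamilies
    set P : Finset (Finset (Finset α)) :=
      F.powerset.filter (fun M => ∀ a ∈ M, ∀ b ∈ M, a ≠ b → a ∩ b = ∅) with hP
    have hPne : P.Nonempty := ⟨∅, by simp [hP]⟩
    obtain ⟨M, hMP, hMmax⟩ := Finset.exists_max_image P Finset.card hPne
    rw [hP, Finset.mem_filter, Finset.mem_powerset] at hMP
    obtain ⟨hMF, hMdisj⟩ := hMP
    by_cases hcase : k + 1 ≤ M.card
    · -- M itself contains a sunflower with empty core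
      obtain ⟨S, hSM, hScard⟩ := Finset.exists_subset_card_eq hcase
      exact ⟨S, hSM.trans hMF, hScard, ∅,
        fun p hp q hq hpq => hMdisj p (hSM hp) q (hSM hq) hpq⟩
    · push_neg at hcase
      have hMk : M.card ≤ k := by omega
      set U : Finset α := M.biUnion id with hU
      -- maximality: any e ∈ F disjoint from U is ∅
      have hmeet : ∀ e ∈ F, e ∩ U = ∅ → e = ∅ := by
        intro e heF hdisj
        have hins : insert e M ∈ P := by
          rw [hP, Finset.mem_filter, Finset.mem_powerset]
          constructor
          · exact Finset.insert_subset heF hMF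
          · intro a ha b hb hab
            rw [Finset.mem_insert] at ha hb
            have key : ∀ m ∈ M, e ∩ m = ∅ := by
              intro m hm
              have hmU : m ⊆ U := by
                intro x hx
                exact Finset.mem_biUnion.mpr ⟨m, hm, hx⟩
              have : e ∩ m ⊆ e ∩ U := Finset.inter_subset_inter le_rfl hmU
              rw [hdisj] at this
              exact Finset.subset_empty.mp this
            rcases ha with ha | ha <;> rcases hb with hb | hb
            · exact absurd (ha.trans hb.symm) hab
            · exact ha ▸ key b hb
            · rw [Finset.inter_comm]; exact hb ▸ key a ha
            · exact hMdisj a ha b hb hab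
        have := hMmax _ hins
        have heM : e ∈ M := by
          by_contra heM
          rw [Finset.card_insert_of_notMem heM] at this
          omega
        have heU : e ⊆ U := fun x hx => Finset.mem_biUnion.mpr ⟨e, heM, hx⟩
        rw [← hdisj]
        exact (Finset.inter_eq_left.mpr heU).symm
      -- the sets meeting U
      set F' : Finset (Finset α) := F.filter (fun e => (e ∩ U).Nonempty) with hF'
      have hF'card : F.card ≤ F'.card + 1 := by
        have : F \ F' ⊆ {∅} := by
          intro e he
          rw [Finset.mem_sdiff, hF', Finset.mem_filter] at he
          obtain ⟨heF, hne⟩ := he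
          have : e ∩ U = ∅ := by
            by_contra h
            exact hne ⟨heF, Finset.nonempty_of_ne_empty h⟩
          simp [hmeet e heF this]
        have h1 : (F \ F').card ≤ 1 := le_trans (Finset.card_le_card this) (by simp)
        have h2 : (F \ F').card + F'.card = F.card :=
          Finset.card_sdiff_add_card_eq_card (Finset.filter_subset _ _)
        omega
      -- pigeonhole: some x ∈ U is in many sets of F
      have hpigeon : ∃ x ∈ U, k ^ d' * Nat.factorial d' <
          (F.filter (fun e => x ∈ e)).card := by
        by_contra hcon
        push_neg at hcon
        set B := k ^ d' * Nat.factorial d' with hB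
        -- F' ⊆ U.biUnion (fun x => F.filter (x ∈ ·))
        have hsub : F' ⊆ U.biUnion (fun x => F.filter (fun e => x ∈ e)) := by
          intro e he
          rw [hF', Finset.mem_filter] at he
          obtain ⟨heF, x, hx⟩ := he
          rw [Finset.mem_inter] at hx
          exact Finset.mem_biUnion.mpr ⟨x, hx.2, Finset.mem_filter.mpr ⟨heF, hx.1⟩⟩
        have hcount : F'.card ≤ U.card * B := by
          calc F'.card ≤ (U.biUnion (fun x => F.filter (fun e => x ∈ e))).card :=
                Finset.card_le_card hsub
            _ ≤ ∑ x ∈ U, (F.filter (fun e => x ∈ e)).card := Finset.card_biUnion_le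
            _ ≤ U.card * B := by
                rw [← smul_eq_mul]
                exact Finset.sum_le_card_nsmul _ _ _ (fun x hx => hcon x hx)
        -- bound on |U|
        have hUcard : U.card ≤ M.card * d := by
          calc U.card ≤ ∑ m ∈ M, (id m).card := Finset.card_biUnion_le
            _ ≤ M.card * d := by
                rw [← smul_eq_mul]
                exact Finset.sum_le_card_nsmul _ _ _ (fun m hm => hsize m (hMF hm))
        by_cases hem : ∅ ∈ F
        · -- then ∅ ∈ M, so |U| ≤ (|M|-1)*d ≤ (k-1)*d
          have hemM : ∅ ∈ M := by
            by_contra hemM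
            have hins : insert ∅ M ∈ P := by
              rw [hP, Finset.mem_filter, Finset.mem_powerset]
              refine ⟨Finset.insert_subset hem hMF, ?_⟩
              intro a ha b hb hab
              rw [Finset.mem_insert] at ha hb
              rcases ha with ha | ha <;> rcases hb with hb | hb
              · exact absurd (ha.trans hb.symm) hab
              · simp [ha]
              · simp [hb]
              · exact hMdisj a ha b hb hab
            have := hMmax _ hins
            rw [Finset.card_insert_of_notMem hemM] at this
            omega
          have hUcard' : U.card ≤ (M.card - 1) * d := by
            have : U = (M.erase ∅).biUnion id := by
              rw [hU]
              ext x
              simp only [Finset.mem_biUnion, id_eq, Finset.mem_erase]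
              constructor
              · rintro ⟨m, hm, hx⟩
                refine ⟨m, ⟨?_, hm⟩, hx⟩
                rintro rfl; exact absurd hx (by simp)
              · rintro ⟨m, ⟨_, hm⟩, hx⟩; exact ⟨m, hm, hx⟩
            rw [this]
            calc ((M.erase ∅).biUnion id).card ≤ ∑ m ∈ M.erase ∅, (id m).card :=
                  Finset.card_biUnion_le
              _ ≤ (M.erase ∅).card * d := by
                  rw [← smul_eq_mul]
                  exact Finset.sum_le_card_nsmul _ _ _
                    (fun m hm => hsize m (hMF (Finset.mem_of_mem_erase hm)))
              _ = (M.card - 1) * d := by rw [Finset.card_erase_of_mem hemM]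
          have hBpos : 0 < B :=
            Nat.mul_pos (pow_pos hk d') (Nat.factorial_pos d')
          have hdBpos : 0 < d * B := Nat.mul_pos (by omega) hBpos
          have hfin : F.card ≤ (k - 1) * d * B + 1 := by
            have hstep : U.card * B ≤ (k - 1) * d * B :=
              Nat.mul_le_mul_right B (hUcard'.trans
                (Nat.mul_le_mul_right d (by omega)))
            omega
          have hid : k ^ d * Nat.factorial d = k * d * B := by
            rw [hB, hd, pow_succ, Nat.factorial_succ]
            ring
          have hsplit : (k - 1) * d * B + d * B = k * d * B := by
            have hk1 : k - 1 + 1 = k := by omega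
            calc (k - 1) * d * B + d * B = ((k - 1) + 1) * d * B := by ring
              _ = k * d * B := by rw [hk1]
          omega
        · -- ∅ ∉ F: F' = F
          have hFF' : F = F' := by
            apply Finset.ext
            intro e
            rw [hF', Finset.mem_filter]
            constructor
            · intro heF
              refine ⟨heF, ?_⟩
              rcases Finset.eq_empty_or_nonempty (e ∩ U) with h | h
              · exact absurd (hmeet e heF h ▸ heF) hem
              · exact h
            · exact fun h => h.1
          have hid : k ^ d * Nat.factorial d = k * d * B := by
            rw [hB, hd, pow_succ, Nat.factorial_succ]; ring
          have h1 : U.card * B ≤ k * d * B :=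
            Nat.mul_le_mul_right B (hUcard.trans (Nat.mul_le_mul_right d hMk))
          have h2 : F.card = F'.card := by rw [hFF']
          omega
      -- use the pigeonhole element x
      obtain ⟨x, hxU, hxcount⟩ := hpigeon
      set Fx := F.filter (fun e => x ∈ e) with hFx
      set G := Fx.image (fun e => e.erase x) with hG
      have hGcard : G.card = Fx.card := by
        rw [hG]
        apply Finset.card_image_of_injOn
        intro a ha b hb hab
        rw [Finset.mem_coe, hFx, Finset.mem_filter] at ha hb
        exact Finset.erase_injOn' x (by simpa using ha.2) (by simpa using hb.2) hab
      have hGsize : ∀ g ∈ G, g.card ≤ d' := by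
        intro g hg
        rw [hG, Finset.mem_image] at hg
        obtain ⟨e, he, rfl⟩ := hg
        rw [hFx, Finset.mem_filter] at he
        rw [Finset.card_erase_of_mem he.2]
        have := hsize e he.1
        omega
      have hGbig : k ^ d' * Nat.factorial d' < G.card := by rw [hGcard]; exact hxcount
      obtain ⟨S', hS'G, hS'card, c', hc'⟩ := ih G hGsize hGbig
      -- lift back by inserting x
      have hxnot : ∀ g ∈ S', x ∉ g := by
        intro g hg
        have := hS'G hg
        rw [hG, Finset.mem_image] at this
        obtain ⟨e, _, rfl⟩ := this
        exact Finset.notMem_erase x e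
      refine ⟨S'.image (insert x), ?_, ?_, insert x c', ?_⟩
      · intro p hp
        rw [Finset.mem_image] at hp
        obtain ⟨g, hg, rfl⟩ := hp
        have := hS'G hg
        rw [hG, Finset.mem_image] at this
        obtain ⟨e, he, rfl⟩ := this
        rw [hFx, Finset.mem_filter] at he
        rw [Finset.insert_erase he.2]
        exact he.1
      · rw [Finset.card_image_of_injOn, hS'card]
        intro a ha b hb hab
        have : (insert x a).erase x = (insert x b).erase x := by rw [hab]
        rwa [Finset.erase_insert (hxnot a ha), Finset.erase_insert (hxnot b hb)] at this
      · intro p hp q hq hpq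
        rw [Finset.mem_image] at hp hq
        obtain ⟨g, hg, rfl⟩ := hp
        obtain ⟨g', hg', rfl⟩ := hq
        have hgg' : g ≠ g' := fun h => hpq (by rw [h])
        rw [insert_inter_insert', hc' g hg g' hg' hgg']

/-- Sunflower Lemma (Erdős–Rado): any family of more than k^d · d! distinct sets,
each of size at most d, contains a sunflower of size k+1. -/
theorem stmt_5 {α : Type*} [DecidableEq α] (k d : ℕ) (F : Finset (Finset α))
    (hsize : ∀ e ∈ F, e.card ≤ d)
    (hbig : k ^ d * Nat.factorial d < F.card) :
    ∃ S ⊆ F, S.card = k + 1 ∧ ∃ c : Finset α,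
      ∀ p ∈ S, ∀ q ∈ S, p ≠ q → p ∩ q = c := by
  rcases Nat.eq_zero_or_pos k with rfl | hk
  · -- k = 0: any single set works, condition is vacuous
    have : F.Nonempty := Finset.card_pos.mp (by omega)
    obtain ⟨e, he⟩ := this
    exact ⟨{e}, Finset.singleton_subset_iff.mpr he, rfl, ∅, by
      intro p hp q hq hpq
      rw [Finset.mem_singleton] at hp hq
      exact absurd (hp.trans hq.symm) hpq⟩
  · exact sunflower_aux k hk d F hsize hbig
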